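/- Let (y_k, x_{k+1}) be generated by the non-Euclidean extragradient step: y_k = P_{x_k}(γ_k F(x_k)), x_{k+1} = P_{x_k}(γ_k F(y_k)). If x* ∈ X satisfies ⟨F(x), x−x*⟩ ≥ 0 for all x ∈ X (generalized monotonicity), then −(γ_k²/(2α))‖F(x_k)−F(y_k)‖_*² + V(x_k, y_k) ≤ V(x_k, x*) − V(x_{k+1}, x*). -/

import Mathlib

open scoped InnerProductSpace

/-- The Bregman distance `V(x,z) = ω(z) − ω(x) − ⟨∇ω(x), z−x⟩`. -/
noncomputable def bregman {n : ℕ} (ω : EuclideanSpace ℝ (Fin n) → ℝ)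
    (gω : EuclideanSpace ℝ (Fin n) → EuclideanSpace ℝ (Fin n))
    (x z : EuclideanSpace ℝ (Fin n)) : ℝ :=
  ω z - ω x - ⟪gω x, z - x⟫_ℝ

open Filter Topology

lemma prox_opt {n : ℕ} {X : Set (EuclideanSpace ℝ (Fin n))} (hXcv : Convex ℝ X)
    (ω : EuclideanSpace ℝ (Fin n) → ℝ) (gω : EuclideanSpace ℝ (Fin n) → EuclideanSpace ℝ (Fin n))
    (φ x u z : EuclideanSpace ℝ (Fin n)) (hu : u ∈ X) (hz : z ∈ X)
    (hgu : HasGradientAt ω (gω u) u)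
    (hmin : IsMinOn (fun w => ⟪φ, w⟫_ℝ + bregman ω gω x w) X u) :
    ⟪φ, u - z⟫_ℝ ≤ bregman ω gω x z - bregman ω gω u z - bregman ω gω x u := by
  set f : EuclideanSpace ℝ (Fin n) → ℝ := fun w => ⟪φ, w⟫_ℝ + bregman ω gω x w with hf
  set D : ℝ := ⟪φ, z - u⟫_ℝ + (⟪gω u, z - u⟫_ℝ - ⟪gω x, z - u⟫_ℝ) with hD
  have hDpos : 0 ≤ D := by
    have hline : HasDerivAt (fun t : ℝ => u + t • (z - u)) (z - u) (0 : ℝ) := by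
      simpa using ((hasDerivAt_id (0 : ℝ)).smul_const (z - u)).const_add u
    have hf' : HasFDerivAt f
        (innerSL ℝ φ + ((InnerProductSpace.toDual ℝ (EuclideanSpace ℝ (Fin n))) (gω u)
          - innerSL ℝ (gω x))) u := by
      have h1 : HasFDerivAt (fun w : EuclideanSpace ℝ (Fin n) => ⟪φ, w⟫_ℝ) (innerSL ℝ φ) u :=
        (innerSL ℝ φ).hasFDerivAt
      have h2 := hgu.hasFDerivAt
      have h3 : HasFDerivAt (fun w : EuclideanSpace ℝ (Fin n) => ⟪gω x, w - x⟫_ℝ)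
          (innerSL ℝ (gω x)) u := by
        have := ((innerSL ℝ (gω x)).hasFDerivAt (x := u)).sub_const (⟪gω x, x⟫_ℝ)
        simpa [inner_sub_right] using this
      exact h1.add ((h2.sub_const (ω x)).sub h3)
    have hf'' : HasFDerivAt f
        (innerSL ℝ φ + ((InnerProductSpace.toDual ℝ (EuclideanSpace ℝ (Fin n))) (gω u)
          - innerSL ℝ (gω x))) ((fun t : ℝ => u + t • (z - u)) 0) := by
      simpa using hf'
    have hcomp : HasDerivAt (fun t : ℝ => f (u + t • (z - u))) D 0 := by
      have := hf''.comp_hasDerivAt 0 hline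
      simp only [hD, Function.comp_def] at this ⊢
      exact this
    have hslope : Tendsto (slope (fun t : ℝ => f (u + t • (z - u))) 0) (𝓝[>] (0:ℝ)) (𝓝 D) :=
      (hasDerivAt_iff_tendsto_slope.mp hcomp).mono_left
        (nhdsWithin_mono _ (fun t ht => ht.ne'))
    refine ge_of_tendsto hslope ?_
    filter_upwards [Ioc_mem_nhdsGT (zero_lt_one)] with t ht
    have hmem : u + t • (z - u) ∈ X := by
      have h := hXcv hu hz (by linarith [ht.2] : (0:ℝ) ≤ 1 - t) (le_of_lt ht.1) (by ring)
      have heq : (1 - t) • u + t • z = u + t • (z - u) := by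
        rw [smul_sub, sub_smul, one_smul]; abel
      rwa [heq] at h
    have h0 : f (u + (0:ℝ) • (z - u)) = f u := by norm_num
    have hle : f u ≤ f (u + t • (z - u)) := hmin hmem
    rw [slope_def_field]
    simp only [sub_zero]
    rw [div_nonneg_iff]
    left
    constructor
    · rw [h0]; linarith
    · exact le_of_lt ht.1
  simp only [hD, bregman, inner_sub_left, inner_sub_right] at hDpos ⊢
  linarith

section normfacts

variable {n : ℕ} (nrm : EuclideanSpace ℝ (Fin n) → ℝ)
  (hn0 : ∀ v, nrm v = 0 ↔ v = 0)
  (hns : ∀ (c : ℝ) v, nrm (c • v) = |c| * nrm v)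
  (hnt : ∀ v w, nrm (v + w) ≤ nrm v + nrm w)

include hn0 hns hnt

lemma nrm_nonneg (v : EuclideanSpace ℝ (Fin n)) : 0 ≤ nrm v := by
  have h0 : nrm 0 = 0 := (hn0 0).mpr rfl
  have hneg : nrm (-v) = nrm v := by
    rw [← neg_one_smul ℝ v, hns]; norm_num
  have := hnt v (-v)
  simp only [add_neg_cancel, h0, hneg] at this
  linarith

lemma nrm_sum_le (s : Finset (Fin n)) (f : Fin n → EuclideanSpace ℝ (Fin n)) :
    nrm (∑ i ∈ s, f i) ≤ ∑ i ∈ s, nrm (f i) := by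
  classical
  induction s using Finset.induction_on with
  | empty => simp [(hn0 0).mpr rfl]
  | insert a s hni ih =>
    rw [Finset.sum_insert hni, Finset.sum_insert hni]
    exact le_trans (hnt _ _) (by linarith)

lemma nrm_continuous : Continuous nrm := by
  classical
  set C : ℝ := ∑ i : Fin n, nrm (EuclideanSpace.single i 1) with hC
  have hC0 : 0 ≤ C := Finset.sum_nonneg fun i _ => nrm_nonneg nrm hn0 hns hnt _
  have habs : ∀ (x : EuclideanSpace ℝ (Fin n)) (i : Fin n), |x i| ≤ ‖x‖ := by
    intro x i
    have := abs_real_inner_le_norm (EuclideanSpace.single i (1:ℝ)) x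
    simpa [EuclideanSpace.inner_single_left, EuclideanSpace.norm_single] using this
  have hbound : ∀ x : EuclideanSpace ℝ (Fin n), nrm x ≤ C * ‖x‖ := by
    intro x
    have hx : x = ∑ i : Fin n, x i • EuclideanSpace.single i (1:ℝ) := by
      have := (EuclideanSpace.basisFun (Fin n) ℝ).sum_repr x
      simp only [EuclideanSpace.basisFun_repr, EuclideanSpace.basisFun_apply] at this
      exact this.symm
    calc nrm x = nrm (∑ i : Fin n, x i • EuclideanSpace.single i (1:ℝ)) := by
          conv_lhs => rw [hx]
      _ ≤ ∑ i : Fin n, nrm (x i • EuclideanSpace.single i (1:ℝ)) :=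
          nrm_sum_le nrm hn0 hns hnt _ _
      _ ≤ ∑ i : Fin n, ‖x‖ * nrm (EuclideanSpace.single i (1:ℝ)) := by
          refine Finset.sum_le_sum fun i _ => ?_
          rw [hns]
          exact mul_le_mul_of_nonneg_right (habs x i) (nrm_nonneg nrm hn0 hns hnt _)
      _ = C * ‖x‖ := by rw [hC, Finset.sum_mul]; exact Finset.sum_congr rfl fun i _ => mul_comm _ _
  have hlip : LipschitzWith (Real.toNNReal C) nrm := by
    rw [lipschitzWith_iff_dist_le_mul]
    intro x y
    rw [Real.dist_eq, dist_eq_norm, Real.coe_toNNReal C hC0]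
    have h1 : nrm x - nrm y ≤ C * ‖x - y‖ := by
      have := hnt y (x - y)
      simp only [add_sub_cancel] at this
      linarith [hbound (x - y)]
    have h2 : nrm y - nrm x ≤ C * ‖x - y‖ := by
      have := hnt x (y - x)
      simp only [add_sub_cancel] at this
      have hb := hbound (y - x)
      rw [norm_sub_rev] at hb
      linarith
    rw [abs_le]
    constructor <;> linarith
  exact hlip.continuous

lemma nrm_equiv : ∃ c > 0, ∀ v : EuclideanSpace ℝ (Fin n), c * ‖v‖ ≤ nrm v := by
  classical
  by_cases hall : ∀ v : EuclideanSpace ℝ (Fin n), v = 0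
  · exact ⟨1, one_pos, fun v => by rw [hall v]; simp [(hn0 0).mpr rfl]⟩
  · push_neg at hall
    obtain ⟨v₀, hv₀⟩ := hall
    have hsph : (‖v₀‖⁻¹ • v₀) ∈ Metric.sphere (0 : EuclideanSpace ℝ (Fin n)) 1 := by
      simp [norm_smul, inv_mul_cancel₀ (norm_ne_zero_iff.mpr hv₀)]
    obtain ⟨m, hm, hmin⟩ := (isCompact_sphere (0 : EuclideanSpace ℝ (Fin n)) 1).exists_isMinOn
      ⟨_, hsph⟩ (nrm_continuous nrm hn0 hns hnt).continuousOn
    have hm1 : ‖m‖ = 1 := by simpa using hm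
    have hmne : m ≠ 0 := by intro h; rw [h] at hm1; simp at hm1
    have hc : 0 < nrm m := by
      rcases lt_or_eq_of_le (nrm_nonneg nrm hn0 hns hnt m) with h | h
      · exact h
      · exact absurd ((hn0 m).mp h.symm) hmne
    refine ⟨nrm m, hc, fun v => ?_⟩
    rcases eq_or_ne v 0 with rfl | hv
    · simp [(hn0 0).mpr rfl]
    · have hu : (‖v‖⁻¹ • v) ∈ Metric.sphere (0 : EuclideanSpace ℝ (Fin n)) 1 := by
        simp [norm_smul, inv_mul_cancel₀ (norm_ne_zero_iff.mpr hv)]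
      have h1 : nrm m ≤ nrm (‖v‖⁻¹ • v) := hmin hu
      have h2 : nrm (‖v‖⁻¹ • v) = ‖v‖⁻¹ * nrm v := by
        rw [hns]; rw [abs_of_nonneg (by positivity)]
      have hvpos : 0 < ‖v‖ := norm_pos_iff.mpr hv
      rw [h2] at h1
      calc nrm m * ‖v‖ ≤ (‖v‖⁻¹ * nrm v) * ‖v‖ := by
            exact mul_le_mul_of_nonneg_right h1 hvpos.le
        _ = nrm v := by field_simp
end normfacts

lemma dual_ineq {n : ℕ} (nrm dnrm : EuclideanSpace ℝ (Fin n) → ℝ)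
    (hn0 : ∀ v, nrm v = 0 ↔ v = 0)
    (hns : ∀ (c : ℝ) v, nrm (c • v) = |c| * nrm v)
    (hnt : ∀ v w, nrm (v + w) ≤ nrm v + nrm w)
    (hdual : ∀ φ, dnrm φ = sSup ((fun v => ⟪φ, v⟫_ℝ) '' {v | nrm v ≤ 1}))
    (φ v : EuclideanSpace ℝ (Fin n)) : ⟪φ, v⟫_ℝ ≤ dnrm φ * nrm v := by
  rcases eq_or_ne v 0 with rfl | hv
  · simp [(hn0 0).mpr rfl]
  · obtain ⟨c, hcpos, hc⟩ := nrm_equiv nrm hn0 hns hnt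
    have hbdd : BddAbove ((fun v => ⟪φ, v⟫_ℝ) '' {v | nrm v ≤ 1}) := by
      refine ⟨‖φ‖ * (1 / c), ?_⟩
      rintro y ⟨w, hw, rfl⟩
      have hwn : ‖w‖ ≤ 1 / c := by
        have := hc w
        rw [le_div_iff₀ hcpos]
        calc ‖w‖ * c = c * ‖w‖ := by ring
          _ ≤ nrm w := this
          _ ≤ 1 := hw
      calc ⟪φ, w⟫_ℝ ≤ ‖φ‖ * ‖w‖ := real_inner_le_norm φ w
        _ ≤ ‖φ‖ * (1 / c) := mul_le_mul_of_nonneg_left hwn (norm_nonneg φ)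
    have ht0 : 0 < nrm v :=
      lt_of_le_of_ne (nrm_nonneg nrm hn0 hns hnt v) (Ne.symm (fun h => hv ((hn0 v).mp h)))
    have hu : nrm ((nrm v)⁻¹ • v) ≤ 1 := by
      rw [hns, abs_of_nonneg (by positivity), inv_mul_cancel₀ ht0.ne']
    have hle : ⟪φ, (nrm v)⁻¹ • v⟫_ℝ ≤ dnrm φ := by
      rw [hdual]
      exact le_csSup hbdd ⟨_, hu, rfl⟩
    rw [real_inner_smul_right] at hle
    calc ⟪φ, v⟫_ℝ = ((nrm v)⁻¹ * ⟪φ, v⟫_ℝ) * nrm v := by field_simp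
      _ ≤ dnrm φ * nrm v := mul_le_mul_of_nonneg_right hle ht0.le

/-- One step of the non-Euclidean extragradient method:
`y_k = P_{x_k}(γ_k F(x_k))`, `x_{k+1} = P_{x_k}(γ_k F(y_k))`. For a generalized-monotone
solution `x*`, `−(γ_k²/(2α))‖F(x_k)−F(y_k)‖_*² + V(x_k,y_k) ≤ V(x_k,x*) − V(x_{k+1},x*)`. -/
theorem stmt12 {n : ℕ} (X Xo : Set (EuclideanSpace ℝ (Fin n)))
    (hXne : X.Nonempty) (hXcl : IsClosed X) (hXcv : Convex ℝ X) (hXoX : Xo ⊆ X)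
    (nrm dnrm : EuclideanSpace ℝ (Fin n) → ℝ)
    (hn0 : ∀ v, nrm v = 0 ↔ v = 0)
    (hns : ∀ (c : ℝ) v, nrm (c • v) = |c| * nrm v)
    (hnt : ∀ v w, nrm (v + w) ≤ nrm v + nrm w)
    (hdual : ∀ φ, dnrm φ = sSup ((fun v => ⟪φ, v⟫_ℝ) '' {v | nrm v ≤ 1}))
    (F : EuclideanSpace ℝ (Fin n) → EuclideanSpace ℝ (Fin n))
    (hFct : ContinuousOn F X)
    (α : ℝ) (hα : 0 < α)
    (ω : EuclideanSpace ℝ (Fin n) → ℝ)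
    (gω : EuclideanSpace ℝ (Fin n) → EuclideanSpace ℝ (Fin n))
    (hωcv : ConvexOn ℝ X ω)
    (hgrad : ∀ y ∈ Xo, HasGradientAt ω (gω y) y)
    (hsc : ∀ y ∈ Xo, ∀ z ∈ X, α / 2 * (nrm (y - z)) ^ 2 ≤ bregman ω gω y z)
    (xs : EuclideanSpace ℝ (Fin n)) (hxs : xs ∈ X)
    (hGM : ∀ x ∈ X, 0 ≤ ⟪F x, x - xs⟫_ℝ)
    (γk : ℝ) (hγk : 0 < γk)
    (xk yk xk1 : EuclideanSpace ℝ (Fin n))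
    (hxk : xk ∈ X) (hxko : xk ∈ Xo)
    (hykX : yk ∈ X) (hyko : yk ∈ Xo)
    (hyk : IsMinOn (fun z => ⟪γk • F xk, z⟫_ℝ + bregman ω gω xk z) X yk)
    (hxk1X : xk1 ∈ X) (hxk1o : xk1 ∈ Xo)
    (hxk1 : IsMinOn (fun z => ⟪γk • F yk, z⟫_ℝ + bregman ω gω xk z) X xk1) :
    -(γk ^ 2 / (2 * α)) * (dnrm (F xk - F yk)) ^ 2 + bregman ω gω xk yk ≤
      bregman ω gω xk xs - bregman ω gω xk1 xs := by

  have hB := prox_opt hXcv ω gω (γk • F xk) xk yk xk1 hykX hxk1X (hgrad yk hyko) hyk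
  have hA := prox_opt hXcv ω gω (γk • F yk) xk xk1 xs hxk1X hxs (hgrad xk1 hxk1o) hxk1
  have h1 : ⟪γk • F yk, xk1 - xs⟫_ℝ =
      γk * ⟪F yk, yk - xs⟫_ℝ + γk * ⟪F xk, xk1 - yk⟫_ℝ - γk * ⟪F xk - F yk, xk1 - yk⟫_ℝ := by
    simp only [real_inner_smul_left, inner_sub_left, inner_sub_right]; ring
  have h2 : ⟪γk • F xk, yk - xk1⟫_ℝ = -(γk * ⟪F xk, xk1 - yk⟫_ℝ) := by
    simp only [real_inner_smul_left, inner_sub_left, inner_sub_right]; ring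
  have hGMy : 0 ≤ γk * ⟪F yk, yk - xs⟫_ℝ := mul_nonneg hγk.le (hGM yk hykX)
  set d : ℝ := dnrm (F xk - F yk) with hdd
  set t : ℝ := nrm (yk - xk1) with htt
  have hnn : nrm (xk1 - yk) = t := by
    rw [htt, ← neg_sub xk1 yk, ← neg_one_smul ℝ (xk1 - yk), hns]
    norm_num
  have hd : ⟪F xk - F yk, xk1 - yk⟫_ℝ ≤ d * t := by
    have := dual_ineq nrm dnrm hn0 hns hnt hdual (F xk - F yk) (xk1 - yk)
    rwa [hnn] at this
  have hd' : γk * ⟪F xk - F yk, xk1 - yk⟫_ℝ ≤ γk * (d * t) :=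
    mul_le_mul_of_nonneg_left hd hγk.le
  have hsc' : α / 2 * t ^ 2 ≤ bregman ω gω yk xk1 := hsc yk hyko xk1 hxk1X
  have h2α : (0:ℝ) < 2 * α := by linarith
  have h3 : γk ^ 2 / (2 * α) * d ^ 2 + α / 2 * t ^ 2 - γk * (d * t) =
      (γk * d - α * t) ^ 2 / (2 * α) := by
    field_simp; ring
  have key : γk * (d * t) ≤ γk ^ 2 / (2 * α) * d ^ 2 + α / 2 * t ^ 2 := by
    have := div_nonneg (sq_nonneg (γk * d - α * t)) h2α.le
    linarith
  rw [h1] at hA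
  rw [h2] at hB
  linarith
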